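/- arXiv:2310.16090 — 2 statements merged into one kernel-verified Lean document; each statement's English description precedes it below -/
import Mathlib

section
/- There exists a group automorphism of the multiplicative group ℂˣ of nonzero complex numbers whose order is exactly 3 (i.e., f ∘ f ∘ f = id but f ≠ id). -/
open Complex Real

noncomputable def psi (L : ℝ → ℝ) (z : ℂˣ) : ℂˣ :=
  Units.mk0 ((z : ℂ) / (‖(z : ℂ)‖ : ℂ) *
      ((Real.exp (L (Real.log (‖(z : ℂ)‖))) : ℝ) : ℂ))
    (by
      have hz : (z : ℂ) ≠ 0 := z.ne_zero
      have ha : (‖(z : ℂ)‖ : ℂ) ≠ 0 := by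
        simpa using norm_ne_zero_iff.mpr hz
      exact mul_ne_zero (div_ne_zero hz ha)
        (by exact_mod_cast Real.exp_ne_zero _))

lemma psi_val (L : ℝ → ℝ) (z : ℂˣ) :
    (psi L z : ℂ) = (z : ℂ) / (‖(z : ℂ)‖ : ℂ) *
      ((Real.exp (L (Real.log (‖(z : ℂ)‖))) : ℝ) : ℂ) := rfl

lemma abs_psi (L : ℝ → ℝ) (z : ℂˣ) :
    ‖(psi L z : ℂ)‖ = Real.exp (L (Real.log (‖(z : ℂ)‖))) := by
  have hz : (z : ℂ) ≠ 0 := z.ne_zero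
  have ha : ‖(z : ℂ)‖ ≠ 0 := norm_ne_zero_iff.mpr hz
  simp [psi_val, map_mul, map_div₀, Complex.norm_real, abs_of_pos (Real.exp_pos _),
    div_self ha, norm_norm]

lemma psi_psi (L M : ℝ → ℝ) (z : ℂˣ) :
    psi L (psi M z) = psi (fun r => L (M r)) z := by
  apply Units.ext
  have hz : (z : ℂ) ≠ 0 := z.ne_zero
  have he : (Real.exp (M (Real.log (‖(z : ℂ)‖))) : ℂ) ≠ 0 := by
    exact_mod_cast Real.exp_ne_zero _
  rw [psi_val, abs_psi, psi_val, Real.log_exp, psi_val]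
  push_cast
  field_simp

lemma psi_id (z : ℂˣ) : psi (fun r => r) z = z := by
  apply Units.ext
  have hz : (z : ℂ) ≠ 0 := z.ne_zero
  have ha : 0 < ‖(z : ℂ)‖ := norm_pos_iff.mpr hz
  rw [psi_val, Real.exp_log ha, div_mul_cancel₀]
  simpa using ha.ne'

lemma psi_mul (L : ℝ → ℝ) (hL : ∀ a b, L (a + b) = L a + L b) (z w : ℂˣ) :
    psi L (z * w) = psi L z * psi L w := by
  apply Units.ext
  have hz : ‖(z : ℂ)‖ ≠ 0 := norm_ne_zero_iff.mpr z.ne_zero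
  have hw : ‖(w : ℂ)‖ ≠ 0 := norm_ne_zero_iff.mpr w.ne_zero
  rw [Units.val_mul, psi_val, psi_val, psi_val, Units.val_mul, norm_mul,
    Real.log_mul hz hw, hL, Real.exp_add]
  push_cast
  field_simp

/-- There exists a group automorphism of the multiplicative group `ℂˣ`
whose order is exactly 3: `f ∘ f ∘ f = id` but `f ≠ id`. -/
theorem exists_order_three_automorphism_of_complex_units :
    ∃ f : ℂˣ ≃* ℂˣ, (∀ z, f (f (f z)) = z) ∧ f ≠ MulEquiv.refl ℂˣ := by
  classical
  set ι := Module.Basis.ofVectorSpaceIndex ℚ ℝ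
  set b : Module.Basis ι ℚ ℝ := Module.Basis.ofVectorSpace ℚ ℝ with hb
  -- ι is infinite
  have hinf : Infinite ι := by
    by_contra hfin
    rw [not_infinite_iff_finite] at hfin
    have : Countable (ι →₀ ℚ) := inferInstance
    have : Countable ℝ := Countable.of_equiv _ b.repr.toEquiv.symm
    exact Cardinal.not_countable_real Set.countable_univ
  obtain ⟨i, j, k, hij, hik, hjk⟩ : ∃ i j k : ι, i ≠ j ∧ i ≠ k ∧ j ≠ k := by
    have emb := Infinite.natEmbedding ι
    exact ⟨emb 0, emb 1, emb 2, fun h => by simpa using emb.injective h,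
      fun h => by simpa using emb.injective h, fun h => by simpa using emb.injective h⟩
  -- 3-cycle permutation
  set e : Equiv.Perm ι := Equiv.swap i j * Equiv.swap i k with he
  have hei : e i = k := by simp [he, Equiv.swap_apply_of_ne_of_ne hik.symm hjk.symm]
  have hek : e k = j := by simp [he]
  have hej : e j = i := by simp [he, Equiv.swap_apply_of_ne_of_ne hij.symm hjk]
  have he3 : ∀ x, e (e (e x)) = x := by
    intro x
    by_cases hxi : x = i
    · simp [hxi, hei, hek, hej]
    by_cases hxj : x = j
    · simp [hxj, hei, hek, hej]
    by_cases hxk : x = k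
    · simp [hxk, hei, hek, hej]
    · have : e x = x := by
        simp [he, Equiv.swap_apply_of_ne_of_ne hxi hxk, Equiv.swap_apply_of_ne_of_ne hxi hxj]
      simp [this]
  -- the linear map of order 3
  set Le : ℝ ≃ₗ[ℚ] ℝ := b.equiv b e with hLe
  set L : ℝ → ℝ := fun r => Le r with hL
  have hL3 : ∀ r, L (L (L r)) = r := by
    intro r
    have : ((Le.toLinearMap.comp Le.toLinearMap).comp Le.toLinearMap) = LinearMap.id := by
      apply b.ext
      intro x
      simp [hLe, Module.Basis.equiv_apply, he3]
    exact congrArg (fun (g : ℝ →ₗ[ℚ] ℝ) => g r) this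
  have hLadd : ∀ a c : ℝ, L (a + c) = L a + L c := fun a c => map_add Le a c
  refine ⟨{ toFun := psi L
            invFun := psi (fun r => L (L r))
            left_inv := ?_
            right_inv := ?_
            map_mul' := psi_mul L hLadd }, ?_, ?_⟩
  · intro z
    rw [psi_psi]
    simp only [hL3]
    exact psi_id z
  · intro z
    rw [psi_psi]
    have : (fun r => L (L (L r))) = fun r => r := funext hL3
    simp only [hL3]
    exact psi_id z
  · intro z
    show psi L (psi L (psi L z)) = z
    rw [psi_psi, psi_psi]
    simp only [hL3]
    exact psi_id z
  · intro hcontr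
    -- evaluate at z = exp (b i)
    set z : ℂˣ := Units.mk0 ((Real.exp (b i) : ℝ) : ℂ)
      (by exact_mod_cast Real.exp_ne_zero _) with hz
    have h1 : psi L z = z := by
      have := congrArg (fun g : ℂˣ ≃* ℂˣ => g z) hcontr
      simpa using this
    have habs : ‖(z : ℂ)‖ = Real.exp (b i) := by
      simp [hz, Complex.norm_real, abs_of_pos (Real.exp_pos _)]
    have h2 : ‖(psi L z : ℂ)‖ = Real.exp (L (b i)) := by
      rw [abs_psi, habs, Real.log_exp]
    rw [h1, habs] at h2
    have h3 : b i = L (b i) := Real.exp_injective h2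
    have h4 : L (b i) = b k := by
      simp [hL, hLe, Module.Basis.equiv_apply, hei]
    rw [h4] at h3
    exact hik (b.injective h3)
end

section
/- Every continuous group automorphism f of ℂˣ (with its usual topology) satisfying f ∘ f ∘ f = id is the identity. In particular, ℂˣ has no continuous automorphism of order exactly 3. -/
open Complex intervalIntegral

/-- Every continuous homomorphism from `(ℝ, +)` to `(ℂ, *)` is `t ↦ exp (w * t)`. -/
lemma cts_hom_real_eq_exp (c : ℝ → ℂ) (hcont : Continuous c) (h0 : c 0 = 1)
    (hadd : ∀ s t : ℝ, c (s + t) = c s * c t) :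
    ∃ w : ℂ, ∀ t : ℝ, c t = Complex.exp (w * t) := by
  -- choose δ with `c` close to 1 on `[0, δ]`
  have hct : ContinuousAt c 0 := hcont.continuousAt
  rw [Metric.continuousAt_iff] at hct
  obtain ⟨ε, hε, hball⟩ := hct (1/2) (by norm_num)
  set δ : ℝ := ε / 2 with hδdef
  have hδpos : 0 < δ := by positivity
  have hbound : ∀ x ∈ Set.uIoc (0:ℝ) δ, ‖c x - 1‖ ≤ 1/2 := by
    intro x hx
    rw [Set.uIoc_of_le hδpos.le] at hx
    have hx1 : dist x 0 < ε := by
      rw [Real.dist_eq, sub_zero, abs_of_pos hx.1]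
      linarith [hx.2]
    have := hball hx1
    rw [h0, dist_eq_norm] at this
    exact this.le
  set A : ℂ := ∫ s in (0:ℝ)..δ, c s with hAdef
  have hInt : ∀ a b : ℝ, IntervalIntegrable c MeasureTheory.volume a b :=
    fun a b => hcont.intervalIntegrable a b
  have hA : A ≠ 0 := by
    intro h
    have h1 : ∫ s in (0:ℝ)..δ, (c s - 1) = A - δ := by
      rw [intervalIntegral.integral_sub (hInt 0 δ) (intervalIntegrable_const)]
      simp [Complex.real_smul]
      rfl
    have h2 : ‖∫ s in (0:ℝ)..δ, (c s - 1)‖ ≤ (1/2) * |δ - 0| :=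
      intervalIntegral.norm_integral_le_of_norm_le_const hbound
    rw [h1, h, zero_sub, norm_neg] at h2
    rw [abs_of_pos (by linarith : (0:ℝ) < δ - 0)] at h2
    have h3 : ‖(δ:ℂ)‖ = δ := by
      rw [Complex.norm_real, Real.norm_eq_abs, abs_of_pos hδpos]
    rw [h3] at h2
    linarith
  -- antiderivative
  set F : ℝ → ℂ := fun t => ∫ s in (0:ℝ)..t, c s with hFdef
  have key : ∀ t : ℝ, c t * A = F (t + δ) - F t := by
    intro t
    have h1 : F t + (∫ s in t..(t+δ), c s) = F (t + δ) :=
      intervalIntegral.integral_add_adjacent_intervals (hInt 0 t) (hInt t (t+δ))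
    have h2 : (∫ s in (0:ℝ)..δ, c (t + s)) = ∫ s in t..(t+δ), c s := by
      rw [intervalIntegral.integral_comp_add_left c t, add_zero]
    have h3 : (∫ s in (0:ℝ)..δ, c (t + s)) = c t * A := by
      rw [show (fun s => c (t + s)) = fun s => c t * c s from funext fun s => hadd t s,
        intervalIntegral.integral_const_mul]
    rw [← h1, h3.symm, h2]; ring
  have hF : ∀ t : ℝ, HasDerivAt F (c t) t := fun t =>
    intervalIntegral.integral_hasDerivAt_right (hInt 0 t)
      (hcont.stronglyMeasurableAtFilter _ _) hcont.continuousAt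
  have hceq : ∀ t : ℝ, c t = (F (t + δ) - F t) * A⁻¹ := by
    intro t
    field_simp
    exact key t
  have hc' : ∀ t : ℝ, HasDerivAt c ((c (t + δ) - c t) * A⁻¹) t := by
    intro t
    have h1 : HasDerivAt (fun t : ℝ => F (t + δ)) (c (t + δ)) t :=
      HasDerivAt.comp_add_const t δ (hF (t + δ))
    have h2 : HasDerivAt (fun t : ℝ => (F (t + δ) - F t) * A⁻¹)
        ((c (t + δ) - c t) * A⁻¹) t := (h1.sub (hF t)).mul_const A⁻¹
    exact h2.congr_of_eventuallyEq (Filter.Eventually.of_forall hceq)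
  set w : ℂ := (c δ - 1) * A⁻¹ with hwdef
  have hde : ∀ t : ℝ, HasDerivAt c (w * c t) t := by
    intro t
    have h1 : HasDerivAt (fun s : ℝ => c (t + s)) ((c (t + 0 + δ) - c (t + 0)) * A⁻¹) 0 :=
      HasDerivAt.comp_const_add t 0 (hc' (t + 0))
    have h2 : HasDerivAt (fun s : ℝ => c t * c s) (c t * ((c (0 + δ) - c 0) * A⁻¹)) 0 :=
      (hc' 0).const_mul (c t)
    have hfun : (fun s : ℝ => c (t + s)) = fun s : ℝ => c t * c s :=
      funext fun s => hadd t s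
    rw [hfun] at h1
    have heq : (c (t + δ) - c t) * A⁻¹ = w * c t := by
      have hu := h1.unique h2
      rw [add_zero] at hu
      rw [hu, zero_add, h0, hwdef]
      ring
    exact heq ▸ hc' t
  refine ⟨w, fun t => ?_⟩
  set g : ℝ → ℂ := fun t => c t * Complex.exp (-(w * t)) with hgdef
  have hg : ∀ t : ℝ, HasDerivAt g 0 t := by
    intro t
    have hinner : HasDerivAt (fun t : ℝ => -(w * (t:ℂ))) (-w) t := by
      have hid : HasDerivAt (fun t : ℝ => (t:ℂ)) 1 t := Complex.ofRealCLM.hasDerivAt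
      have h := (hid.const_mul w).neg
      rw [mul_one] at h
      exact h
    have hexp : HasDerivAt (fun t : ℝ => Complex.exp (-(w * (t:ℂ))))
        (Complex.exp (-(w * (t:ℂ))) * (-w)) t := hinner.cexp
    have : HasDerivAt g (w * c t * Complex.exp (-(w * (t:ℂ))) + c t * (Complex.exp (-(w * (t:ℂ))) * -w)) t :=
      (hde t).mul hexp
    convert this using 1
    ring
  have hconst : ∀ t : ℝ, g t = g 0 :=
    fun t => is_const_of_deriv_eq_zero (fun x => (hg x).differentiableAt)
      (fun x => (hg x).deriv) t 0
  have hg0 : g 0 = 1 := by simp [hgdef, h0]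
  have hgt : c t * Complex.exp (-(w * t)) = 1 := by
    have h := hconst t
    rw [hg0] at h
    exact h
  calc c t = c t * (Complex.exp (-(w * (t:ℂ))) * Complex.exp (w * t)) := by
        rw [← Complex.exp_add]
        simp
    _ = (c t * Complex.exp (-(w * (t:ℂ)))) * Complex.exp (w * t) := by ring
    _ = Complex.exp (w * t) := by rw [hgt, one_mul]

noncomputable def uexp (z : ℂ) : ℂˣ := Units.mk0 (Complex.exp z) (Complex.exp_ne_zero z)

@[simp] lemma uexp_val (z : ℂ) : ((uexp z : ℂˣ) : ℂ) = Complex.exp z := rfl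

lemma uexp_add (a b : ℂ) : uexp (a + b) = uexp a * uexp b :=
  Units.ext (by simp [Complex.exp_add])

lemma uexp_zero : uexp 0 = 1 := Units.ext (by simp [uexp])

lemma continuous_uexp : Continuous uexp := by
  rw [Units.continuous_iff]
  constructor
  · exact Complex.continuous_exp
  · have h : (fun z : ℂ => (((uexp z)⁻¹ : ℂˣ) : ℂ)) = fun z => Complex.exp (-z) := by
      funext z
      rw [Units.val_inv_eq_inv_val, uexp_val, Complex.exp_neg]
    rw [h]
    fun_prop

/-- Every continuous group automorphism `f` of `ℂˣ` (with its usual topology)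
satisfying `f ∘ f ∘ f = id` is the identity; in particular `ℂˣ` has no continuous
automorphism of order exactly 3. -/
theorem continuous_automorphism_of_complex_units_cube_eq_id :
    ∀ f : ℂˣ ≃* ℂˣ, Continuous f → (∀ z, f (f (f z)) = z) → f = MulEquiv.refl ℂˣ := by
  intro f hf h3
  set c₁ : ℝ → ℂ := fun t => ((f (uexp (t:ℂ)) : ℂˣ) : ℂ) with hc₁def
  set c₂ : ℝ → ℂ := fun t => ((f (uexp ((t:ℂ) * I)) : ℂˣ) : ℂ) with hc₂def
  have hcont1 : Continuous c₁ :=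
    Units.continuous_val.comp (hf.comp (continuous_uexp.comp Complex.continuous_ofReal))
  have hcont2 : Continuous c₂ :=
    Units.continuous_val.comp (hf.comp (continuous_uexp.comp
      (Complex.continuous_ofReal.mul continuous_const)))
  have h01 : c₁ 0 = 1 := by simp [hc₁def, uexp_zero]
  have h02 : c₂ 0 = 1 := by simp [hc₂def, uexp_zero]
  have hadd1 : ∀ s t : ℝ, c₁ (s + t) = c₁ s * c₁ t := by
    intro s t
    simp only [hc₁def, Complex.ofReal_add, uexp_add, map_mul, Units.val_mul]
  have hadd2 : ∀ s t : ℝ, c₂ (s + t) = c₂ s * c₂ t := by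
    intro s t
    simp only [hc₂def, Complex.ofReal_add, add_mul, uexp_add, map_mul, Units.val_mul]
  obtain ⟨w₁, hw₁⟩ := cts_hom_real_eq_exp c₁ hcont1 h01 hadd1
  obtain ⟨w₂, hw₂⟩ := cts_hom_real_eq_exp c₂ hcont2 h02 hadd2
  set L : ℂ → ℂ := fun z => w₁ * z.re + w₂ * z.im with hLdef
  have key : ∀ z : ℂ, f (uexp z) = uexp (L z) := by
    intro z
    have hz : ((z.re : ℂ)) + (z.im : ℂ) * I = z := Complex.re_add_im z
    apply Units.ext
    calc ((f (uexp z) : ℂˣ) : ℂ)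
        = ((f (uexp ((z.re : ℂ) + (z.im : ℂ) * I)) : ℂˣ) : ℂ) := by rw [hz]
      _ = c₁ z.re * c₂ z.im := by
          rw [uexp_add, map_mul, Units.val_mul]
      _ = Complex.exp (w₁ * z.re) * Complex.exp (w₂ * z.im) := by rw [hw₁, hw₂]
      _ = Complex.exp (L z) := by rw [← Complex.exp_add]
      _ = ((uexp (L z) : ℂˣ) : ℂ) := rfl
  have hLsmul : ∀ (t : ℝ) (z : ℂ), L ((t:ℂ) * z) = (t:ℂ) * L z := by
    intro t z
    simp only [hLdef, Complex.mul_re, Complex.mul_im, Complex.ofReal_re, Complex.ofReal_im]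
    push_cast
    ring
  have hL3exp : ∀ z : ℂ, Complex.exp (L (L (L z)) - z) = 1 := by
    intro z
    have h := h3 (uexp z)
    rw [key z, key (L z), key (L (L z))] at h
    have hval : Complex.exp (L (L (L z))) = Complex.exp z := congrArg Units.val h
    rw [Complex.exp_sub, hval, div_self (Complex.exp_ne_zero z)]
  have hL3 : ∀ z : ℂ, L (L (L z)) = z := by
    intro z
    obtain ⟨n, hn⟩ := Complex.exp_eq_one_iff.mp (hL3exp z)
    by_cases hn0 : n = 0
    · rw [hn0] at hn; simpa using sub_eq_zero.mp (by simpa using hn)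
    · exfalso
      set t : ℝ := (2 * (n:ℝ))⁻¹ with htdef
      have hscale : L (L (L ((t:ℂ) * z))) - (t:ℂ) * z = (t:ℂ) * (L (L (L z)) - z) := by
        rw [hLsmul t z, hLsmul t (L z), hLsmul t (L (L z))]
        ring
      have h2 := hL3exp ((t:ℂ) * z)
      rw [hscale, hn] at h2
      have hval : (t:ℂ) * ((n:ℂ) * (2 * (Real.pi:ℂ) * I)) = Real.pi * I := by
        have hne : ((n:ℂ)) ≠ 0 := Int.cast_ne_zero.mpr hn0
        rw [htdef]
        push_cast
        field_simp
      rw [hval, Complex.exp_pi_mul_I] at h2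
      norm_num at h2
  -- w₂ is an integer multiple of I
  have hw2I : ∃ n : ℤ, w₂ = (n:ℂ) * I := by
    have h1 : uexp ((((2 * Real.pi : ℝ)):ℂ) * I) = 1 := by
      apply Units.ext
      push_cast
      simpa using Complex.exp_two_pi_mul_I
    have h2 : c₂ (2 * Real.pi) = 1 := by
      rw [hc₂def]
      simp only [h1, map_one, Units.val_one]
    rw [hw₂] at h2
    obtain ⟨n, hn⟩ := Complex.exp_eq_one_iff.mp h2
    refine ⟨n, ?_⟩
    have h2π : (2 * (Real.pi:ℂ)) ≠ 0 := by
      simp [Complex.ofReal_ne_zero, Real.pi_ne_zero]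
    apply mul_right_cancel₀ h2π
    push_cast at hn ⊢
    linear_combination hn
  obtain ⟨n, hn⟩ := hw2I
  have hLI : L I = ((n:ℝ):ℂ) * I := by
    simp [hLdef, hn]
  have hn1 : n = 1 := by
    have h := hL3 I
    have hm3 : (((n:ℝ):ℂ)) * ((((n:ℝ):ℂ)) * ((((n:ℝ):ℂ)) * I)) = I := by
      conv_rhs => rw [← h]
      simp only [hLsmul, hLI]
    have hm3' : (((n:ℝ):ℂ))^3 * I = 1 * I := by rw [one_mul]; linear_combination hm3
    have hz : n^3 = 1 := by
      have := mul_right_cancel₀ Complex.I_ne_zero hm3'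
      exact_mod_cast this
    nlinarith [sq_nonneg (n - 1), sq_nonneg (n + 1), sq_nonneg n]
  -- now pin down w₁
  have hLw : ∀ z : ℂ, L z = w₁ * z.re + I * z.im := by
    intro z
    simp only [hLdef, hn, hn1]
    push_cast
    ring
  have h1 := hL3 1
  obtain ⟨a, b⟩ := w₁
  simp only [hLw, Complex.ext_iff, Complex.add_re, Complex.add_im, Complex.mul_re,
    Complex.mul_im, Complex.I_re, Complex.I_im, Complex.one_re, Complex.one_im,
    Complex.ofReal_re, Complex.ofReal_im] at h1
  obtain ⟨ha, hb⟩ := h1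
  ring_nf at ha hb
  have ha1 : a = 1 := by
    have hfac : (a - 1) * (a^2 + a + 1) = 0 := by linear_combination ha
    have hpos : a^2 + a + 1 > 0 := by nlinarith [sq_nonneg (2*a + 1)]
    rcases mul_eq_zero.mp hfac with h | h
    · linarith
    · linarith
  subst ha1
  have hb0 : b = 0 := by nlinarith [hb]
  subst hb0
  have hLz : ∀ z : ℂ, L z = z := by
    intro z
    rw [hLw]
    apply Complex.ext <;>
      simp [Complex.mul_re, Complex.mul_im, Complex.add_re, Complex.add_im]
  have hfix : ∀ u : ℂˣ, f u = u := by
    intro u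
    have hu : uexp (Complex.log (u:ℂ)) = u :=
      Units.ext (by simp [Complex.exp_log u.ne_zero])
    rw [← hu, key, hLz]
  exact MulEquiv.ext fun u => hfix u
end
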